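/- Let f be a convex quartic polynomial on ℝⁿ with positive definite leading form f₄ and ‖u‖_f = (f₄[u]⁴)^{1/4}. Then for all x, y and all τ > 0: f(y) − f(x) − ⟨∇f(x), y−x⟩ − (1/2)∇²f(x)[y−x,y−x] ≥ −(1/(6τ)) ∇²f(x)[y−x,y−x] + (1−2τ) ‖y−x‖_f⁴. -/

import Mathlib

/-- The derivative of a monotone function is nonnegative. -/
lemma monotone_hasDerivAt_nonneg {φ : ℝ → ℝ} {d τ : ℝ} (hm : Monotone φ)
    (hd : HasDerivAt φ d τ) : 0 ≤ d := by
  have h := hasDerivAt_iff_tendsto_slope.1 hd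
  have h2 : Filter.Tendsto (slope φ τ) (nhdsWithin τ (Set.Ioi τ)) (nhds d) :=
    h.mono_left (nhdsWithin_mono τ (fun z hz => ne_of_gt hz))
  refine ge_of_tendsto h2 ?_
  filter_upwards [self_mem_nhdsWithin] with z hz
  have hz' : τ < z := hz
  rw [slope_def_field]
  exact div_nonneg (sub_nonneg.2 (hm hz'.le)) (sub_nonneg.2 hz'.le)

lemma poly_hasDerivAt (a b c d : ℝ) (s : ℝ) :
    HasDerivAt (fun u : ℝ => a * u + b * u ^ 2 + c * u ^ 3 + d * u ^ 4)
      (a + 2 * b * s + 3 * c * s ^ 2 + 4 * d * s ^ 3) s := by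
  have h := (((hasDerivAt_pow 1 s).const_mul a).add ((hasDerivAt_pow 2 s).const_mul b)).add
    (((hasDerivAt_pow 3 s).const_mul c).add ((hasDerivAt_pow 4 s).const_mul d))
  have e1 : (fun u : ℝ => a * u + b * u ^ 2 + c * u ^ 3 + d * u ^ 4)
      = fun u : ℝ => a * u ^ 1 + b * u ^ 2 + (c * u ^ 3 + d * u ^ 4) := by
    funext u; ring
  rw [e1]
  refine h.congr_deriv ?_
  push_cast
  ring

lemma poly_step {g : ℝ → ℝ} {a b c d : ℝ}
    (hg : ∀ s, HasDerivAt g (a + 2 * b * s + 3 * c * s ^ 2 + 4 * d * s ^ 3) s) (t : ℝ) :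
    g t = g 0 + a * t + b * t ^ 2 + c * t ^ 3 + d * t ^ 4 := by
  have key : ∀ s, HasDerivAt
      (fun u => g u - (a * u + b * u ^ 2 + c * u ^ 3 + d * u ^ 4)) 0 s := by
    intro s
    exact ((hg s).sub (poly_hasDerivAt a b c d s)).congr_deriv (by ring)
  have h2 := is_const_of_deriv_eq_zero
    (f := fun u => g u - (a * u + b * u ^ 2 + c * u ^ 3 + d * u ^ 4))
    (fun s => (key s).differentiableAt) (fun s => (key s).deriv) t 0
  norm_num at h2
  linarith

theorem quartic_lower_approx {n : ℕ}
    (f : EuclideanSpace ℝ (Fin n) → ℝ)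
    (f4 : MultilinearMap ℝ (fun _ : Fin 4 => EuclideanSpace ℝ (Fin n)) ℝ)
    (hsymm : ∀ (v : Fin 4 → EuclideanSpace ℝ (Fin n)) (σ : Equiv.Perm (Fin 4)),
      f4 (v ∘ σ) = f4 v)
    (hf : ContDiff ℝ 4 f)
    (hconv : ConvexOn ℝ Set.univ f)
    (hD4 : ∀ (x : EuclideanSpace ℝ (Fin n)) (v : Fin 4 → EuclideanSpace ℝ (Fin n)),
      iteratedFDeriv ℝ 4 f x v = 24 * f4 v)
    (hpd : ∀ u : EuclideanSpace ℝ (Fin n), u ≠ 0 → 0 < f4 ![u, u, u, u])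
    (x y : EuclideanSpace ℝ (Fin n)) (τ : ℝ) (hτ : 0 < τ) :
    f y - f x - fderiv ℝ f x (y - x)
        - (1 / 2) * iteratedFDeriv ℝ 2 f x ![y - x, y - x]
      ≥ -(1 / (6 * τ)) * iteratedFDeriv ℝ 2 f x ![y - x, y - x]
        + (1 - 2 * τ) * f4 ![y - x, y - x, y - x, y - x] := by
  set h : EuclideanSpace ℝ (Fin n) := y - x with hh
  set c : ℝ → EuclideanSpace ℝ (Fin n) := fun t => x + t • h with hc
  set D : ℕ → ℝ → ℝ := fun k t => iteratedFDeriv ℝ k f (c t) (fun _ => h) with hD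
  set C : ℝ := f4 ![h, h, h, h] with hCdef
  -- curve derivative
  have hcd : ∀ t : ℝ, HasDerivAt c h t := by
    intro t
    have := ((hasDerivAt_id t).smul_const h).const_add x
    simpa [hc] using this
  -- derivative of D k is D (k+1)
  have hder : ∀ k : ℕ, k < 4 → ∀ t : ℝ, HasDerivAt (D k) (D (k+1) t) t := by
    intro k hk t
    have hF : Differentiable ℝ (iteratedFDeriv ℝ k f) :=
      hf.differentiable_iteratedFDeriv (by exact_mod_cast hk)
    have h1 : HasFDerivAt (iteratedFDeriv ℝ k f)
        (fderiv ℝ (iteratedFDeriv ℝ k f) (c t)) (c t) := (hF (c t)).hasFDerivAt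
    have h2 : HasDerivAt (fun s => iteratedFDeriv ℝ k f (c s))
        (fderiv ℝ (iteratedFDeriv ℝ k f) (c t) h) t := h1.comp_hasDerivAt t (hcd t)
    have h3 := ((ContinuousMultilinearMap.apply ℝ
        (fun _ : Fin k => EuclideanSpace ℝ (Fin n)) ℝ
        (fun _ => h)).hasFDerivAt.comp_hasDerivAt t h2)
    have key : D (k+1) t = (fderiv ℝ (iteratedFDeriv ℝ k f) (c t) h) (fun _ => h) := by
      show iteratedFDeriv ℝ (k+1) f (c t) (fun _ => h) = _
      rw [iteratedFDeriv_succ_apply_left]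
      rfl
    rw [key]
    exact h3
  -- D 4 is constant 24 C
  have hvec4 : (fun _ : Fin 4 => h) = ![h, h, h, h] := by
    funext i; fin_cases i <;> rfl
  have hD4' : ∀ t : ℝ, D 4 t = 24 * C := by
    intro t
    show iteratedFDeriv ℝ 4 f (c t) (fun _ => h) = 24 * C
    rw [hvec4]
    exact hD4 (c t) _
  -- polynomial formulas
  have hstep3 : ∀ t : ℝ, D 3 t = D 3 0 + 24 * C * t :=  by
    intro t
    have := poly_step (g := D 3) (a := 24 * C) (b := 0) (c := 0) (d := 0)
      (fun s => by simpa [hD4' s] using hder 3 (by norm_num) s) t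
    simpa using this
  have hstep2 : ∀ t : ℝ, D 2 t = D 2 0 + D 3 0 * t + 12 * C * t ^ 2 := by
    intro t
    have := poly_step (g := D 2) (a := D 3 0) (b := 12 * C) (c := 0) (d := 0)
      (fun s => by
        have h := hder 2 (by norm_num) s
        rw [hstep3 s] at h
        convert h using 1; ring) t
    simpa using this
  have hstep1 : ∀ t : ℝ, D 1 t = D 1 0 + D 2 0 * t + (D 3 0 / 2) * t ^ 2 + 4 * C * t ^ 3 := by
    intro t
    have := poly_step (g := D 1) (a := D 2 0) (b := D 3 0 / 2) (c := 4 * C) (d := 0)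
      (fun s => by
        have h := hder 1 (by norm_num) s
        rw [hstep2 s] at h
        convert h using 1; ring) t
    simpa using this
  have hstep0 : ∀ t : ℝ, D 0 t = D 0 0 + D 1 0 * t + (D 2 0 / 2) * t ^ 2
      + (D 3 0 / 6) * t ^ 3 + C * t ^ 4 := by
    intro t
    have := poly_step (g := D 0) (a := D 1 0) (b := D 2 0 / 2) (c := D 3 0 / 6) (d := C)
      (fun s => by
        have h := hder 0 (by norm_num) s
        rw [hstep1 s] at h
        convert h using 1; ring) t
    linarith [this]
  -- convexity: D 2 τ ≥ 0
  have hg : ∀ t : ℝ, D 0 t = f (c t) := by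
    intro t
    show iteratedFDeriv ℝ 0 f (c t) (fun _ => h) = f (c t)
    rw [iteratedFDeriv_zero_apply]
  have hgconv : ConvexOn ℝ Set.univ (D 0) := by
    have haff := hconv.comp_affineMap (AffineMap.lineMap x y : ℝ →ᵃ[ℝ] EuclideanSpace ℝ (Fin n))
    have heq : (D 0) = (f ∘ (AffineMap.lineMap x y : ℝ →ᵃ[ℝ] EuclideanSpace ℝ (Fin n))) := by
      funext t
      rw [hg t]
      simp only [Function.comp_apply, AffineMap.lineMap_apply]
      congr 1
      rw [hc, hh]
      simp only [vsub_eq_sub, vadd_eq_add]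
      module
    rw [heq]
    simpa using haff
  have hmono : Monotone (D 1) := by
    have hmono' : MonotoneOn (deriv (D 0)) Set.univ :=
      hgconv.monotoneOn_deriv (fun s _ => (hder 0 (by norm_num) s).differentiableAt)
    have heq : deriv (D 0) = D 1 := by
      funext s; exact ((hder 0 (by norm_num) s).deriv).symm ▸ rfl
    have heq2 : deriv (D 0) = D 1 := by
      funext s; exact (hder 0 (by norm_num) s).deriv
    rw [heq2] at hmono'
    exact fun a b hab => hmono' (Set.mem_univ a) (Set.mem_univ b) hab
  have hD2τ : 0 ≤ D 2 τ := monotone_hasDerivAt_nonneg hmono (hder 1 (by norm_num) τ)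
  -- C ≥ 0
  have hC : 0 ≤ C := by
    rcases eq_or_ne h 0 with h0 | h0
    · rw [hCdef, h0]
      rw [f4.map_coord_zero 0 rfl]
    · exact (hpd h h0).le
  -- translate goal
  have hc0 : c 0 = x := by rw [hc]; simp
  have hc1 : c 1 = y := by rw [hc, hh]; simp
  have hfy : f y = D 0 1 := by rw [hg 1, hc1]
  have hfx : f x = D 0 0 := by rw [hg 0, hc0]
  have hfd1 : fderiv ℝ f x (y - x) = D 1 0 := by
    show _ = iteratedFDeriv ℝ 1 f (c 0) (fun _ => h)
    rw [hc0, iteratedFDeriv_one_apply]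
  have hvec2 : (fun _ : Fin 2 => h) = ![h, h] := by funext i; fin_cases i <;> rfl
  have hfd2 : iteratedFDeriv ℝ 2 f x ![y - x, y - x] = D 2 0 := by
    show _ = iteratedFDeriv ℝ 2 f (c 0) (fun _ => h)
    rw [hc0, hvec2]
  have hτ2 : D 2 0 + D 3 0 * τ + 12 * C * τ ^ 2 ≥ 0 := by
    have := hstep2 τ; linarith [hD2τ]
  have hpoly : D 0 1 = D 0 0 + D 1 0 + D 2 0 / 2 + D 3 0 / 6 + C := by
    have := hstep0 1; linarith [this]
  rw [hfy, hfx, hfd1, hfd2, hpoly]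
  have h6τ : (0:ℝ) < 6 * τ := by linarith
  have key2 : -(D 2 0) / (6 * τ) ≤ D 3 0 / 6 + 2 * τ * C := by
    rw [div_le_iff₀ h6τ]
    nlinarith [hτ2]
  have e : -(1 / (6 * τ)) * D 2 0 = -(D 2 0) / (6 * τ) := by ring
  rw [ge_iff_le, e]
  linarith [key2]
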